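/- For every nonnegative integer m, the quantity α_m = 2·(2m−1)!!/(2m+2)!! satisfies α_m ≤ 1/((m+1)·√(π m)) for all m ≥ 1. -/

import Mathlib

open Nat

noncomputable def alphaFD (m : ℕ) : ℝ :=
  2 * (Nat.doubleFactorial (2 * m - 1) : ℝ) / (Nat.doubleFactorial (2 * m + 2) : ℝ)

open Filter Real Topology

noncomputable def VFD (m : ℕ) : ℝ := Real.Wallis.W m * (2 * m + 1) / m

lemma VFD_succ_le (m : ℕ) (hm : 1 ≤ m) : VFD (m + 1) ≤ VFD m := by
  have hW := Real.Wallis.W_pos m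
  have hx : (1 : ℝ) ≤ (m : ℝ) := by exact_mod_cast hm
  have hx0 : (0 : ℝ) < m := by linarith
  unfold VFD
  rw [Real.Wallis.W_succ]
  push_cast
  rw [div_le_div_iff₀ (by positivity) hx0]
  have key : (4 * (m:ℝ) * (m + 1)) ≤ (2 * m + 1)^2 := by nlinarith
  have h1 : (0:ℝ) < 2 * m + 1 := by positivity
  have h3 : (0:ℝ) < 2 * m + 3 := by positivity
  have e : Real.Wallis.W m * ((2 * ↑m + 2) / (2 * ↑m + 1) * ((2 * ↑m + 2) / (2 * ↑m + 3))) *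
      (2 * (↑m + 1) + 1) * ↑m = Real.Wallis.W m * ((2*(m:ℝ)+2)^2 * m) / (2*m+1) := by
    field_simp
    ring
  rw [e, div_le_iff₀ h1]
  nlinarith [hW, sq_nonneg ((m:ℝ)+1)]

lemma VFD_tendsto : Tendsto VFD atTop (𝓝 π) := by
  have h1 : Tendsto (fun m : ℕ => (2 * (m:ℝ) + 1) / m) atTop (𝓝 2) := by
    have : Tendsto (fun m : ℕ => 2 + ((m:ℝ))⁻¹) atTop (𝓝 (2 + 0)) :=
      tendsto_const_nhds.add tendsto_inv_atTop_nhds_zero_nat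
    rw [add_zero] at this
    refine this.congr' ?_
    filter_upwards [eventually_ge_atTop 1] with m hm
    have hm0 : (m:ℝ) ≠ 0 := by positivity
    field_simp
  have := Real.Wallis.tendsto_W_nhds_pi_div_two.mul h1
  have e : π / 2 * 2 = π := by ring
  rw [e] at this
  refine this.congr fun m => ?_
  unfold VFD
  rw [mul_div_assoc]

lemma pi_le_VFD (m : ℕ) (hm : 1 ≤ m) : π ≤ VFD m := by
  refine le_of_tendsto VFD_tendsto ?_
  filter_upwards [eventually_ge_atTop m] with k hk
  obtain ⟨j, rfl⟩ := Nat.exists_eq_add_of_le hk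
  clear hk
  induction j with
  | zero => simp
  | succ n ih => exact le_trans (VFD_succ_le (m + n) (le_trans hm (Nat.le_add_right m n))) ih

lemma key_ineq (m : ℕ) (hm : 1 ≤ m) :
    π * m * ((2 * m)! : ℝ)^2 ≤ 16 ^ m * ((m ! : ℝ))^4 := by
  have h := pi_le_VFD m hm
  unfold VFD at h
  rw [Real.Wallis.W_eq_factorial_ratio] at h
  have hx0 : (0 : ℝ) < m := by exact_mod_cast hm
  have hf : (0:ℝ) < ((2*m)! : ℝ) := by exact_mod_cast Nat.factorial_pos _
  have h1 : (0:ℝ) < 2 * (m:ℝ) + 1 := by positivity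
  have e : (2:ℝ) ^ (4 * m) * ↑m ! ^ 4 / (↑(2 * m)! ^ 2 * (2 * ↑m + 1)) * (2 * ↑m + 1) / ↑m
      = 2 ^ (4*m) * (m ! : ℝ)^4 / ((↑(2*m)!)^2 * m) := by
    field_simp
  rw [e, le_div_iff₀ (by positivity)] at h
  have e2 : (16:ℝ) ^ m = 2 ^ (4 * m) := by
    rw [pow_mul]; norm_num
  rw [e2]
  nlinarith [h]

theorem alpha_bound (m : ℕ) (hm : 1 ≤ m) :
    alphaFD m ≤ 1 / ((m + 1) * Real.sqrt (Real.pi * m)) := by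
  have hm0 : (0:ℝ) < m := by exact_mod_cast hm
  set D : ℝ := ((2*m-1)‼ : ℝ) with hDdef
  have hD : 0 ≤ D := Nat.cast_nonneg _
  set M : ℝ := (m ! : ℝ) with hMdef
  have hM : 0 < M := by rw [hMdef]; exact_mod_cast Nat.factorial_pos m
  have hcast : ((2*m)! : ℝ) = 2^m * M * D := by
    have h2m : 2*m-1+1 = 2*m := by omega
    have hn : (2*m)! = (2*m)‼ * (2*m-1)‼ := by
      rw [← h2m]; exact Nat.factorial_eq_mul_doubleFactorial _
    rw [hn, Nat.doubleFactorial_two_mul]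
    push_cast
    ring
  have hkey2 : Real.sqrt (π * m) * D ≤ 2^m * M := by
    have hsq : (Real.sqrt (π * m) * D)^2 ≤ (2^m * M)^2 := by
      rw [mul_pow, Real.sq_sqrt (by positivity)]
      have hk := key_ineq m hm
      rw [hcast] at hk
      have e16 : (16:ℝ)^m = ((2:ℝ)^m)^4 := by
        rw [show (16:ℝ) = 2^4 by norm_num, ← pow_mul, ← pow_mul, Nat.mul_comm]
      rw [e16] at hk
      have hp : (0:ℝ) < (2^m * M)^2 := by positivity
      nlinarith [hk, hp, Real.pi_pos, sq_nonneg D]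
    have h' := Real.sqrt_le_sqrt hsq
    rwa [Real.sqrt_sq (by positivity), Real.sqrt_sq (by positivity)] at h'
  have hdd : ((2*m+2)‼ : ℕ) = 2^(m+1) * (m+1)! := by
    rw [show 2*m+2 = 2*(m+1) by ring]
    exact Nat.doubleFactorial_two_mul _
  unfold alphaFD
  rw [hdd]
  have hs0 : 0 < Real.sqrt (π * m) := Real.sqrt_pos.mpr (by positivity)
  rw [div_le_div_iff₀ (by positivity) (by positivity)]
  have hfac : ((m+1)! : ℝ) = (m+1) * M := by
    rw [Nat.factorial_succ]; push_cast; ring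
  push_cast [hfac]
  have hm1 : (0:ℝ) < (m:ℝ) + 1 := by positivity
  calc 2 * D * ((↑m + 1) * Real.sqrt (π * ↑m))
      = 2 * ((m:ℝ)+1) * (Real.sqrt (π * m) * D) := by ring
    _ ≤ 2 * ((m:ℝ)+1) * (2^m * M) := by
        apply mul_le_mul_of_nonneg_left hkey2 (by positivity)
    _ = 1 * (2^(m+1) * (((m:ℝ)+1) * M)) := by rw [pow_succ]; ring
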